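/- Let P(λ) = Σ_{i=0}^d P_i λ^i be an m×n polynomial matrix of degree d > 1, let L_s(λ) be the Lancaster pencil of size (md)×(nd), and let T be the associated block Hankel matrix. Define the unimodular polynomial matrices V(λ) := (the (d×d) lower triangular matrix with 1's on the diagonal, last row (λ^{d−1}, ..., λ^2, λ, 1), zeros elsewhere) ⊗ I_m and W(λ) := (the d×d upper triangular Toeplitz matrix with (j,k) entry λ^{k−j} for k ≥ j) ⊗ I_n. Then V(λ) L_s(λ) W(λ) = diag(−T, P(λ)). -/

import Mathlib

open Matrix Polynomial

/-- Coefficient `P_i` with the convention `P_i := 0` for `i` outside `{0, ..., d}`. -/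
noncomputable def coeffP (m n d : ℕ) (P : Fin (d + 1) → Matrix (Fin m) (Fin n) ℂ)
    (i : ℕ) : Matrix (Fin m) (Fin n) ℂ :=
  if h : i < d + 1 then P ⟨i, h⟩ else 0

/-- The Lancaster pencil `L_s(λ) = [[A_s(λ), -B_s(λ)],[C_s(λ), D_s(λ)]]` of size
`md × nd`, written with block indices `(j,k)` (`0`-indexed, `j,k = 0,...,d-1`):
the `(d-1,d-1)` block is `D_s(λ) = λ P_1 + P_0`; for `k < d-1` the `(d-1,k)` block
of `C_s(λ)` is `λ P_{d-k}`; for `j < d-1` the `(j,d-1)` block of `-B_s(λ)` is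
`λ P_{d-j}`; and for `j,k < d-1` the `(j,k)` block of `A_s(λ)` is
`λ P_{2d-1-j-k} - P_{2d-2-j-k}` (with `P_i := 0` for `i > d`). -/
noncomputable def lancasterLs (m n d : ℕ) (P : Fin (d + 1) → Matrix (Fin m) (Fin n) ℂ) :
    Matrix (Fin d × Fin m) (Fin d × Fin n) (Polynomial ℂ) := fun p q =>
  if p.1.1 = d - 1 ∧ q.1.1 = d - 1 then
    X * C (coeffP m n d P 1 p.2 q.2) + C (coeffP m n d P 0 p.2 q.2)
  else if p.1.1 = d - 1 then X * C (coeffP m n d P (d - q.1.1) p.2 q.2)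
  else if q.1.1 = d - 1 then X * C (coeffP m n d P (d - p.1.1) p.2 q.2)
  else
    X * C (coeffP m n d P (2 * d - 1 - p.1.1 - q.1.1) p.2 q.2) -
      C (coeffP m n d P (2 * d - 2 - p.1.1 - q.1.1) p.2 q.2)

/-- The block diagonal matrix `diag(-T, P(λ))`, where `T` is the constant block
Hankel matrix with antidiagonals `P_d, ..., P_2` (the `(j,k)` block of `T`,
`0`-indexed with `j,k < d-1`, is `P_{2d-2-j-k}` when `j+k+2 ≥ d` and `0`
otherwise), and `P(λ) = Σ_i λ^i P_i` sits in the last diagonal block. -/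
noncomputable def diagTP (m n d : ℕ) (P : Fin (d + 1) → Matrix (Fin m) (Fin n) ℂ) :
    Matrix (Fin d × Fin m) (Fin d × Fin n) (Polynomial ℂ) := fun p q =>
  if p.1.1 = d - 1 ∧ q.1.1 = d - 1 then
    ∑ i : Fin (d + 1), X ^ (i : ℕ) * C (P i p.2 q.2)
  else if p.1.1 = d - 1 ∨ q.1.1 = d - 1 then 0
  else -C (coeffP m n d P (2 * d - 2 - p.1.1 - q.1.1) p.2 q.2)

/-- The unimodular matrix `V(λ)`: the `d × d` lower triangular matrix with `1`'s
on the diagonal, last row `(λ^{d-1}, ..., λ², λ, 1)` and zeros elsewhere, tensored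
(Kronecker) with `I_m`. -/
noncomputable def uniV (m d : ℕ) :
    Matrix (Fin d × Fin m) (Fin d × Fin m) (Polynomial ℂ) := fun p q =>
  (if p.1 = q.1 then 1 else if p.1.1 = d - 1 then X ^ (d - 1 - q.1.1) else 0) *
    (if p.2 = q.2 then 1 else 0)

/-- The unimodular matrix `W(λ)`: the `d × d` upper triangular Toeplitz matrix with
`(j,k)` entry `λ^{k-j}` for `k ≥ j`, tensored (Kronecker) with `I_n`. -/
noncomputable def uniW (n d : ℕ) :
    Matrix (Fin d × Fin n) (Fin d × Fin n) (Polynomial ℂ) := fun p q =>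
  (if p.1.1 ≤ q.1.1 then X ^ (q.1.1 - p.1.1) else 0) *
    (if p.2 = q.2 then 1 else 0)


open Finset

variable {R : Type*} [CommRing R]

/-- restrict a `≤ k` truncated sum. -/
lemma sum_ite_le (d k : ℕ) (hk : k < d) (f : ℕ → R) :
    ∑ r ∈ range d, (if r ≤ k then f r else 0) = ∑ r ∈ range (k + 1), f r := by
  have h1 : ∑ r ∈ range (k + 1), (if r ≤ k then f r else 0)
      = ∑ r ∈ range d, (if r ≤ k then f r else 0) :=
    Finset.sum_subset (Finset.range_subset_range.2 hk) (fun x _ hx => if_neg (by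
      simp only [mem_range] at hx; omega))
  rw [← h1]
  exact Finset.sum_congr rfl fun r hr => if_pos (by simp only [mem_range] at hr; omega)

/-- The scalar Lancaster-pencil entry. -/
def LA (d : ℕ) (x : R) (c : ℕ → R) (q r : ℕ) : R :=
  if q = d - 1 ∧ r = d - 1 then x * c 1 + c 0
  else if q = d - 1 then x * c (d - r)
  else if r = d - 1 then x * c (d - q)
  else x * c (2 * d - 1 - q - r) - c (2 * d - 2 - q - r)

section Inner
variable (d : ℕ) (x : R) (c : ℕ → R)

lemma inner1 (hd : 1 < d) (hc : ∀ i, d < i → c i = 0) {q k : ℕ} (hq : q < d - 1) (hk : k < d - 1) :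
    ∑ r ∈ range d, LA d x c q r * (if r ≤ k then x ^ (k - r) else 0)
      = -c (2 * d - 2 - q - k) := by
  have h1 : ∀ r, LA d x c q r * (if r ≤ k then x ^ (k - r) else 0)
      = if r ≤ k then LA d x c q r * x ^ (k - r) else 0 := by
    intro r; split <;> simp
  simp only [h1]
  rw [sum_ite_le d k (by omega)]
  have h2 : ∀ r ∈ range (k + 1), LA d x c q r * x ^ (k - r)
      = (x ^ (k + 1 - r) * c (2 * d - 1 - q - r))
        - (x ^ (k + 1 - (r + 1)) * c (2 * d - 1 - q - (r + 1))) := by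
    intro r hr
    simp only [mem_range] at hr
    have hr' : r ≤ k := by omega
    rw [LA, if_neg (by omega), if_neg (by omega), if_neg (by omega)]
    have e1 : k + 1 - r = (k - r) + 1 := by omega
    have e2 : 2 * d - 1 - q - (r + 1) = 2 * d - 2 - q - r := by omega
    have e3 : k + 1 - (r + 1) = k - r := by omega
    rw [e1, e2, e3, pow_succ]
    ring
  rw [Finset.sum_congr rfl h2, Finset.sum_range_sub']
  simp only [Nat.sub_zero]
  rw [hc (2 * d - 1 - q) (by omega)]
  have e4 : 2 * d - 1 - q - (k + 1) = 2 * d - 2 - q - k := by omega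
  have e5 : k + 1 - (k + 1) = 0 := by omega
  rw [e4, e5, pow_zero]
  ring

lemma inner2 (hd : 1 < d) (hc : ∀ i, d < i → c i = 0) {q : ℕ} (hq : q < d - 1) :
    ∑ r ∈ range d, LA d x c q r * (if r ≤ d - 1 then x ^ (d - 1 - r) else 0)
      = 0 := by
  have h1 : ∀ r, LA d x c q r * (if r ≤ d - 1 then x ^ (d - 1 - r) else 0)
      = if r ≤ d - 1 then LA d x c q r * x ^ (d - 1 - r) else 0 := by
    intro r; split <;> simp
  simp only [h1]
  rw [sum_ite_le d (d - 1) (by omega)]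
  have hd1 : d - 1 + 1 = d := by omega
  rw [hd1]
  obtain ⟨e, rfl⟩ : ∃ e, d = e + 1 := ⟨d - 1, by omega⟩
  rw [Finset.sum_range_succ]
  have h2 : ∀ r ∈ range e, LA (e + 1) x c q r * x ^ (e + 1 - 1 - r)
      = (x ^ (e + 1 - r) * c (2 * (e + 1) - 1 - q - r))
        - (x ^ (e + 1 - (r + 1)) * c (2 * (e + 1) - 1 - q - (r + 1))) := by
    intro r hr
    simp only [mem_range] at hr
    rw [LA, if_neg (by omega), if_neg (by omega), if_neg (by omega)]
    have e1 : e + 1 - r = (e + 1 - 1 - r) + 1 := by omega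
    have e2 : 2 * (e + 1) - 1 - q - (r + 1) = 2 * (e + 1) - 2 - q - r := by omega
    have e3 : e + 1 - (r + 1) = e + 1 - 1 - r := by omega
    rw [e1, e2, e3, pow_succ]
    ring
  rw [Finset.sum_congr rfl h2, Finset.sum_range_sub']
  simp only [Nat.sub_zero]
  rw [hc (2 * (e + 1) - 1 - q) (by omega)]
  have e4 : 2 * (e + 1) - 1 - q - e = e + 1 - q := by omega
  have e5 : e + 1 - e = 1 := by omega
  rw [e4, e5, pow_one]
  rw [LA, if_neg (by omega), if_neg (by omega), if_pos (by omega)]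
  have e6 : e + 1 - 1 - e = 0 := by omega
  rw [e6, pow_zero]
  ring
end Inner

section Inner2
variable (d : ℕ) (x : R) (c : ℕ → R)

lemma inner3 (hd : 1 < d) {k : ℕ} (hk : k < d - 1) :
    ∑ r ∈ range d, LA d x c (d - 1) r * (if r ≤ k then x ^ (k - r) else 0)
      = ∑ r ∈ range (k + 1), x ^ (k + 1 - r) * c (d - r) := by
  have h1 : ∀ r, LA d x c (d - 1) r * (if r ≤ k then x ^ (k - r) else 0)
      = if r ≤ k then LA d x c (d - 1) r * x ^ (k - r) else 0 := by
    intro r; split <;> simp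
  simp only [h1]
  rw [sum_ite_le d k (by omega)]
  refine Finset.sum_congr rfl fun r hr => ?_
  simp only [mem_range] at hr
  rw [LA, if_neg (by omega), if_pos rfl]
  have e1 : k + 1 - r = (k - r) + 1 := by omega
  rw [e1, pow_succ]
  ring

lemma inner4 (hd : 1 < d) :
    ∑ r ∈ range d, LA d x c (d - 1) r * (if r ≤ d - 1 then x ^ (d - 1 - r) else 0)
      = ∑ i ∈ range (d + 1), x ^ i * c i := by
  have h1 : ∀ r, LA d x c (d - 1) r * (if r ≤ d - 1 then x ^ (d - 1 - r) else 0)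
      = if r ≤ d - 1 then LA d x c (d - 1) r * x ^ (d - 1 - r) else 0 := by
    intro r; split <;> simp
  simp only [h1]
  rw [sum_ite_le d (d - 1) (by omega)]
  obtain ⟨e, rfl⟩ : ∃ e, d = e + 1 + 1 := ⟨d - 2, by omega⟩
  have hd1 : e + 1 + 1 - 1 + 1 = e + 1 + 1 := by omega
  rw [hd1, Finset.sum_range_succ]
  have h2 : ∀ r ∈ range (e + 1), LA (e + 1 + 1) x c (e + 1 + 1 - 1) r * x ^ (e + 1 + 1 - 1 - r)
      = x ^ (e + 1 + 1 - r) * c (e + 1 + 1 - r) := by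
    intro r hr
    simp only [mem_range] at hr
    rw [LA, if_neg (by omega), if_pos (by omega)]
    have e1 : e + 1 + 1 - r = (e + 1 + 1 - 1 - r) + 1 := by omega
    rw [e1, pow_succ]
    ring
  rw [Finset.sum_congr rfl h2]
  have h3 : ∑ r ∈ range (e + 1), x ^ (e + 1 + 1 - r) * c (e + 1 + 1 - r)
      = ∑ t ∈ range (e + 1), x ^ (t + 2) * c (t + 2) := by
    rw [← Finset.sum_range_reflect (fun t => x ^ (t + 2) * c (t + 2)) (e + 1)]
    refine Finset.sum_congr rfl fun r hr => ?_
    simp only [mem_range] at hr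
    have e1 : e + 1 - 1 - r + 2 = e + 1 + 1 - r := by omega
    rw [e1]
  rw [h3]
  rw [Finset.sum_range_succ' (fun i => x ^ i * c i) (e + 1 + 1)]
  rw [Finset.sum_range_succ' (fun i => x ^ (i + 1) * c (i + 1)) (e + 1)]
  rw [LA, if_pos (by omega)]
  have e2 : e + 1 + 1 - 1 - (e + 1) = 0 := by omega
  rw [e2, pow_zero]
  ring

end Inner2

lemma keyLemma (d : ℕ) (hd : 1 < d) (x : R) (c : ℕ → R) (hc : ∀ i, d < i → c i = 0)
    (j k : ℕ) (hj : j < d) (hk : k < d) :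
    ∑ r ∈ range d,
      (∑ q ∈ range d,
        (if j = q then 1 else if j = d - 1 then x ^ (d - 1 - q) else 0) * LA d x c q r)
        * (if r ≤ k then x ^ (k - r) else 0)
      = if j = d - 1 ∧ k = d - 1 then ∑ i ∈ range (d + 1), x ^ i * c i
        else if j = d - 1 ∨ k = d - 1 then 0
        else -c (2 * d - 2 - j - k) := by
  by_cases hjd : j = d - 1
  · -- last block row
    subst hjd
    have hV : ∀ q ∈ range d, ∀ r,
        (if d - 1 = q then (1:R) else if d - 1 = d - 1 then x ^ (d - 1 - q) else 0) * LA d x c q r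
          = x ^ (d - 1 - q) * LA d x c q r := by
      intro q _ r
      by_cases h : d - 1 = q
      · rw [if_pos h, ← h, Nat.sub_self, pow_zero]
      · rw [if_neg h, if_pos rfl]
    have step1 : ∀ r, (∑ q ∈ range d,
        (if d - 1 = q then (1:R) else if d - 1 = d - 1 then x ^ (d - 1 - q) else 0) * LA d x c q r)
        = ∑ q ∈ range d, x ^ (d - 1 - q) * LA d x c q r :=
      fun r => Finset.sum_congr rfl fun q hq => hV q hq r
    have step1' : (∑ r ∈ range d,
        (∑ q ∈ range d,
          (if d - 1 = q then (1:R) else if d - 1 = d - 1 then x ^ (d - 1 - q) else 0) * LA d x c q r)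
          * (if r ≤ k then x ^ (k - r) else 0))
        = ∑ q ∈ range d, x ^ (d - 1 - q)
            * ∑ r ∈ range d, LA d x c q r * (if r ≤ k then x ^ (k - r) else 0) :=
      calc (∑ r ∈ range d,
          (∑ q ∈ range d,
            (if d - 1 = q then (1:R) else if d - 1 = d - 1 then x ^ (d - 1 - q) else 0) * LA d x c q r)
            * (if r ≤ k then x ^ (k - r) else 0))
          = ∑ r ∈ range d, ∑ q ∈ range d,
              x ^ (d - 1 - q) * LA d x c q r * (if r ≤ k then x ^ (k - r) else 0) :=
            Finset.sum_congr rfl fun r _ => by rw [step1 r, Finset.sum_mul]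
        _ = ∑ q ∈ range d, ∑ r ∈ range d,
              x ^ (d - 1 - q) * LA d x c q r * (if r ≤ k then x ^ (k - r) else 0) :=
            Finset.sum_comm
        _ = ∑ q ∈ range d, x ^ (d - 1 - q)
              * ∑ r ∈ range d, LA d x c q r * (if r ≤ k then x ^ (k - r) else 0) :=
            Finset.sum_congr rfl fun q _ => by
              rw [Finset.mul_sum]; exact Finset.sum_congr rfl fun r _ => by ring
    rw [step1']
    obtain ⟨e, rfl⟩ : ∃ e, d = e + 1 := ⟨d - 1, by omega⟩
    simp only [Nat.add_sub_cancel, eq_self_iff_true, true_and, true_or, if_true]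
    rw [Finset.sum_range_succ]
    have i2 := fun (q : ℕ) (hq : q < e) => inner2 (e+1) x c hd hc (q := q) (by omega)
    have i3 := fun (hk' : k < e) => inner3 (e+1) x c hd (k := k) (by omega)
    have i4 := inner4 (e+1) x c hd
    simp only [Nat.add_sub_cancel] at i2 i3 i4
    by_cases hkd : k = e
    · subst hkd
      rw [if_pos rfl, i4]
      have hz : ∀ q ∈ range k, x ^ (k - q) *
          (∑ r ∈ range (k+1), LA (k+1) x c q r * (if r ≤ k then x ^ (k - r) else 0)) = 0 := by
        intro q hq
        simp only [mem_range] at hq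
        rw [i2 q hq, mul_zero]
      rw [Finset.sum_congr rfl hz, Finset.sum_const_zero, Nat.sub_self, pow_zero]
      ring
    · rw [if_neg hkd]
      have hk' : k < e := by omega
      rw [i3 hk']
      have hz : ∀ q ∈ range e, x ^ (e - q) *
          (∑ r ∈ range (e+1), LA (e+1) x c q r * (if r ≤ k then x ^ (k - r) else 0))
          = -(x ^ (e - q) * c (2 * (e + 1) - 2 - q - k)) := by
        intro q hq
        simp only [mem_range] at hq
        rw [inner1 (e+1) x c hd hc (by omega) (by omega)]
        ring
      rw [Finset.sum_congr rfl hz, Nat.sub_self, pow_zero, one_mul]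
      have hA' : ∑ q ∈ range e, x ^ (e - q) * c (2 * (e + 1) - 2 - q - k)
          = ∑ t ∈ range e, x ^ (t + 1) * c (e + 1 - k + t) := by
        rw [← Finset.sum_range_reflect (fun t => x ^ (t + 1) * c (e + 1 - k + t)) e]
        refine Finset.sum_congr rfl fun q hq => ?_
        simp only [mem_range] at hq
        have e1 : e - 1 - q + 1 = e - q := by omega
        have e2 : e + 1 - k + (e - 1 - q) = 2 * (e + 1) - 2 - q - k := by omega
        rw [e1, e2]
      have hA : ∑ q ∈ range e, -(x ^ (e - q) * c (2 * (e + 1) - 2 - q - k))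
          = -∑ t ∈ range e, x ^ (t + 1) * c (e + 1 - k + t) := by
        rw [Finset.sum_neg_distrib, hA']
      have hB : ∑ r ∈ range (k + 1), x ^ (k + 1 - r) * c (e + 1 - r)
          = ∑ t ∈ range (k + 1), x ^ (t + 1) * c (e + 1 - k + t) := by
        rw [← Finset.sum_range_reflect (fun t => x ^ (t + 1) * c (e + 1 - k + t)) (k + 1)]
        refine Finset.sum_congr rfl fun r hr => ?_
        simp only [mem_range] at hr
        have e1 : k + 1 - 1 - r + 1 = k + 1 - r := by omega
        have e2 : e + 1 - k + (k + 1 - 1 - r) = e + 1 - r := by omega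
        rw [e1, e2]
      have hC : ∑ t ∈ range (k + 1), x ^ (t + 1) * c (e + 1 - k + t)
          = ∑ t ∈ range e, x ^ (t + 1) * c (e + 1 - k + t) := by
        refine Finset.sum_subset (Finset.range_subset_range.2 (by omega)) fun t ht hnt => ?_
        simp only [mem_range] at ht hnt
        rw [hc (e + 1 - k + t) (by omega), mul_zero]
      rw [hA, hB, hC]
      ring
  · -- j < d - 1
    have step1 : ∀ r, (∑ q ∈ range d,
        (if j = q then (1:R) else if j = d - 1 then x ^ (d - 1 - q) else 0) * LA d x c q r)
        = LA d x c j r := by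
      intro r
      have : ∀ q ∈ range d, (if j = q then (1:R) else if j = d - 1 then x ^ (d - 1 - q) else 0) * LA d x c q r
          = if j = q then LA d x c q r else 0 := by
        intro q _
        by_cases h : j = q
        · rw [if_pos h, if_pos h, one_mul]
        · rw [if_neg h, if_neg h, if_neg hjd, zero_mul]
      rw [Finset.sum_congr rfl this, Finset.sum_ite_eq, if_pos (Finset.mem_range.2 hj)]
    simp only [step1]
    by_cases hkd : k = d - 1
    · subst hkd
      rw [if_neg (by tauto), if_pos (Or.inr rfl)]
      exact inner2 d x c hd hc (by omega)
    · rw [if_neg (by tauto), if_neg (by tauto)]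
      exact inner1 d x c hd hc (by omega) (by omega)

lemma Vinv_sum (d : ℕ) (x : R) {p q : ℕ} (hp : p < d) (hq : q < d) :
    ∑ s ∈ range d, (if p = s then (1:R) else if p = d - 1 then x ^ (d - 1 - s) else 0)
      * (if s = q then 1 else if s = d - 1 then -x ^ (d - 1 - q) else 0)
      = if p = q then 1 else 0 := by
  by_cases hpd : p = d - 1
  · subst hpd
    have h1 : ∀ s ∈ range d, (if d - 1 = s then (1:R) else if d - 1 = d - 1 then x ^ (d - 1 - s) else 0)
        * (if s = q then 1 else if s = d - 1 then -x ^ (d - 1 - q) else 0)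
        = x ^ (d - 1 - s) * (if s = q then 1 else if s = d - 1 then -x ^ (d - 1 - q) else 0) := by
      intro s _
      by_cases h : d - 1 = s
      · rw [if_pos h, ← h, Nat.sub_self, pow_zero]
      · rw [if_neg h, if_pos rfl]
    rw [Finset.sum_congr rfl h1]
    by_cases hqd : q = d - 1
    · subst hqd
      have h2 : ∀ s ∈ range d, x ^ (d - 1 - s) * (if s = d - 1 then (1:R) else if s = d - 1 then -x ^ (d - 1 - (d-1)) else 0)
          = if s = d - 1 then 1 else 0 := by
        intro s _
        by_cases h : s = d - 1
        · rw [if_pos h, if_pos h, h, Nat.sub_self, pow_zero, one_mul]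
        · rw [if_neg h, if_neg h, if_neg h, mul_zero]
      rw [Finset.sum_congr rfl h2, Finset.sum_ite_eq', if_pos (Finset.mem_range.2 hp), if_pos rfl]
    · have h2 : ∀ s ∈ range d, x ^ (d - 1 - s) * (if s = q then (1:R) else if s = d - 1 then -x ^ (d - 1 - q) else 0)
          = (if s = q then x ^ (d - 1 - q) else 0) + (if s = d - 1 then -x ^ (d - 1 - q) else 0) := by
        intro s _
        by_cases h : s = q
        · rw [if_pos h, if_pos h, if_neg (h ▸ hqd), h, mul_one, add_zero]
        · rw [if_neg h, if_neg h]
          by_cases h' : s = d - 1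
          · rw [if_pos h', h', Nat.sub_self, pow_zero, one_mul, zero_add]
          · rw [if_neg h', mul_zero, add_zero]
      rw [Finset.sum_congr rfl h2, Finset.sum_add_distrib, Finset.sum_ite_eq',
        Finset.sum_ite_eq', if_pos (Finset.mem_range.2 hq), if_pos (Finset.mem_range.2 (by omega)),
        if_neg (by omega)]
      ring
  · have h1 : ∀ s ∈ range d, (if p = s then (1:R) else if p = d - 1 then x ^ (d - 1 - s) else 0)
        * (if s = q then 1 else if s = d - 1 then -x ^ (d - 1 - q) else 0)
        = if p = s then (if s = q then (1:R) else if s = d - 1 then -x ^ (d - 1 - q) else 0) else 0 := by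
      intro s _
      by_cases h : p = s
      · rw [if_pos h, if_pos h, one_mul]
      · rw [if_neg h, if_neg h, if_neg hpd, zero_mul]
    rw [Finset.sum_congr rfl h1, Finset.sum_ite_eq, if_pos (Finset.mem_range.2 hp),
      if_neg (by omega : ¬ p = d - 1)]

lemma Winv_sum (d : ℕ) (x : R) {p q : ℕ} (hp : p < d) (hq : q < d) :
    ∑ s ∈ range d, (if p ≤ s then x ^ (s - p) else 0)
      * (if s = q then 1 else if q = s + 1 then -x else 0)
      = if p = q then 1 else 0 := by
  have h1 : ∀ s ∈ range d, (if p ≤ s then x ^ (s - p) else 0)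
      * (if s = q then (1:R) else if q = s + 1 then -x else 0)
      = (if s = q then (if p ≤ q then x ^ (q - p) else 0) else 0)
        + (if q = s + 1 then (if p ≤ s then -(x ^ (s - p) * x) else 0) else 0) := by
    intro s _
    by_cases h : s = q
    · subst h
      rw [if_neg (show ¬s = s + 1 by omega)]
      simp
    · rw [if_neg h, if_neg h]
      by_cases h' : q = s + 1
      · rw [if_pos h', if_pos h', zero_add]
        by_cases h'' : p ≤ s
        · rw [if_pos h'', if_pos h'']; ring
        · rw [if_neg h'', if_neg h'', zero_mul]
      · rw [if_neg h', if_neg h', mul_zero, add_zero]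
  rw [Finset.sum_congr rfl h1, Finset.sum_add_distrib, Finset.sum_ite_eq',
    if_pos (Finset.mem_range.2 hq)]
  rcases Nat.eq_zero_or_eq_succ_pred q with hq0 | hq1
  · subst hq0
    have h2 : ∀ s ∈ range d, (if (0:ℕ) = s + 1 then (if p ≤ s then -(x ^ (s - p) * x) else 0) else (0:R)) = 0 :=
      fun s _ => if_neg (by omega)
    rw [Finset.sum_congr rfl h2, Finset.sum_const_zero, add_zero]
    by_cases h : p = 0
    · rw [if_pos h, if_pos (by omega), h, Nat.sub_zero, pow_zero]
    · rw [if_neg h, if_neg (by omega)]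
  · obtain ⟨t, rfl⟩ : ∃ t, q = t + 1 := ⟨q - 1, hq1⟩
    have h2 : ∀ s ∈ range d, (if t + 1 = s + 1 then (if p ≤ s then -(x ^ (s - p) * x) else 0) else (0:R))
        = if s = t then (if p ≤ s then -(x ^ (s - p) * x) else 0) else 0 := by
      intro s _
      by_cases h : s = t
      · rw [if_pos (by omega), if_pos h]
      · rw [if_neg (by omega), if_neg h]
    rw [Finset.sum_congr rfl h2, Finset.sum_ite_eq', if_pos (Finset.mem_range.2 (by omega))]
    by_cases h : p ≤ t
    · rw [if_pos (by omega), if_pos h, if_neg (by omega)]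
      have e1 : t + 1 - p = (t - p) + 1 := by omega
      rw [e1, pow_succ]
      ring
    · by_cases h' : p = t + 1
      · rw [if_pos (by omega), if_neg h, if_pos h', h', Nat.sub_self, pow_zero, add_zero]
      · rw [if_neg (by omega), if_neg h, if_neg h', add_zero]
section Glue
open Finset

lemma kron_mul_apply {α : Type*} [CommRing α] {d m : ℕ} (A B : Fin d → Fin d → α)
    (a b : Fin m) (p1 q1 : Fin d) :
    ∑ s : Fin d × Fin m,
      (A p1 s.1 * (if a = s.2 then 1 else 0)) * (B s.1 q1 * (if s.2 = b then 1 else 0))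
      = (∑ s1 : Fin d, A p1 s1 * B s1 q1) * (if a = b then 1 else 0) := by
  rw [Fintype.sum_prod_type, Finset.sum_mul]
  refine Finset.sum_congr rfl fun s1 _ => ?_
  have h : ∀ s2 : Fin m, (A p1 s1 * (if a = s2 then 1 else 0)) * (B s1 q1 * (if s2 = b then 1 else 0))
      = if a = s2 then (if s2 = b then A p1 s1 * B s1 q1 else 0) else 0 := by
    intro s2
    by_cases h1 : a = s2
    · by_cases h2 : s2 = b <;> simp [h1, h2]
    · simp [h1]
  rw [Finset.sum_congr rfl fun s2 _ => h s2, Finset.sum_ite_eq, if_pos (Finset.mem_univ a)]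
  by_cases h2 : a = b <;> simp [h2]

lemma kronL {α : Type*} [CommRing α] {d m : ℕ} (A : Fin d → Fin d → α)
    (M : Fin d × Fin m → α) (a : Fin m) (p1 : Fin d) :
    ∑ s : Fin d × Fin m, (A p1 s.1 * (if a = s.2 then 1 else 0)) * M s
      = ∑ s1 : Fin d, A p1 s1 * M (s1, a) := by
  rw [Fintype.sum_prod_type]
  refine Finset.sum_congr rfl fun s1 _ => ?_
  have h : ∀ s2, (A p1 s1 * (if a = s2 then 1 else 0)) * M (s1, s2)
      = if a = s2 then A p1 s1 * M (s1, s2) else 0 := fun s2 => by split <;> simp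
  rw [Finset.sum_congr rfl fun s2 _ => h s2, Finset.sum_ite_eq, if_pos (Finset.mem_univ a)]

lemma kronR {α : Type*} [CommRing α] {d n : ℕ} (B : Fin d → Fin d → α)
    (M : Fin d × Fin n → α) (b : Fin n) (q1 : Fin d) :
    ∑ r : Fin d × Fin n, M r * (B r.1 q1 * (if r.2 = b then 1 else 0))
      = ∑ r1 : Fin d, M (r1, b) * B r1 q1 := by
  rw [Fintype.sum_prod_type]
  refine Finset.sum_congr rfl fun r1 _ => ?_
  have h : ∀ r2, M (r1, r2) * (B r1 q1 * (if r2 = b then 1 else 0))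
      = if r2 = b then M (r1, r2) * B r1 q1 else 0 := fun r2 => by split <;> simp
  rw [Finset.sum_congr rfl fun r2 _ => h r2, Finset.sum_ite_eq', if_pos (Finset.mem_univ b)]

noncomputable def uniVinv (m d : ℕ) :
    Matrix (Fin d × Fin m) (Fin d × Fin m) (Polynomial ℂ) := fun p q =>
  (if p.1 = q.1 then 1 else if p.1.1 = d - 1 then -X ^ (d - 1 - q.1.1) else 0) *
    (if p.2 = q.2 then 1 else 0)

noncomputable def uniWinv (n d : ℕ) :
    Matrix (Fin d × Fin n) (Fin d × Fin n) (Polynomial ℂ) := fun p q =>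
  (if p.1 = q.1 then 1 else if q.1.1 = p.1.1 + 1 then -X else 0) *
    (if p.2 = q.2 then 1 else 0)

lemma uniV_mul_inv (m d : ℕ) (hd : 1 < d) : uniV m d * uniVinv m d = 1 := by
  refine Matrix.ext fun p q => ?_
  rw [Matrix.mul_apply]
  simp only [uniV, uniVinv]
  rw [kron_mul_apply (fun i j => if i = j then (1 : Polynomial ℂ)
        else if (i : ℕ) = d - 1 then X ^ (d - 1 - (j : ℕ)) else 0)
      (fun i j => if i = j then 1 else if (i : ℕ) = d - 1 then -X ^ (d - 1 - (j : ℕ)) else 0)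
      p.2 q.2 p.1 q.1]
  have hs := Vinv_sum (R := Polynomial ℂ) d X (p := (p.1 : ℕ)) (q := (q.1 : ℕ)) p.1.2 q.1.2
  rw [Finset.sum_range] at hs
  simp only [Fin.ext_iff]
  rw [hs, Matrix.one_apply]
  by_cases h1 : p.1 = q.1 <;> by_cases h2 : p.2 = q.2 <;>
    simp [Prod.ext_iff, Fin.val_eq_val, h1, h2]

lemma uniW_mul_inv (n d : ℕ) (hd : 1 < d) : uniW n d * uniWinv n d = 1 := by
  refine Matrix.ext fun p q => ?_
  rw [Matrix.mul_apply]
  simp only [uniW, uniWinv]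
  rw [kron_mul_apply (fun i j => if (i : ℕ) ≤ (j : ℕ) then (X : Polynomial ℂ) ^ ((j : ℕ) - (i : ℕ)) else 0)
      (fun i j => if i = j then 1 else if (j : ℕ) = (i : ℕ) + 1 then -X else 0)
      p.2 q.2 p.1 q.1]
  have hs := Winv_sum (R := Polynomial ℂ) d X (p := (p.1 : ℕ)) (q := (q.1 : ℕ)) p.1.2 q.1.2
  rw [Finset.sum_range] at hs
  simp only [Fin.ext_iff]
  rw [hs, Matrix.one_apply]
  by_cases h1 : p.1 = q.1 <;> by_cases h2 : p.2 = q.2 <;>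
    simp [Prod.ext_iff, Fin.val_eq_val, h1, h2]

end Glue

/-- `V(λ)` and `W(λ)` are unimodular (their determinants are units)
and `V(λ) L_s(λ) W(λ) = diag(-T, P(λ))`. -/
theorem stmt_9 (m n d : ℕ) (hd : 1 < d)
    (P : Fin (d + 1) → Matrix (Fin m) (Fin n) ℂ) :
    IsUnit (uniV m d).det ∧ IsUnit (uniW n d).det ∧
      uniV m d * lancasterLs m n d P * uniW n d = diagTP m n d P := by
  refine ⟨IsUnit.of_mul_eq_one (uniVinv m d).det
      (by rw [← Matrix.det_mul, uniV_mul_inv m d hd, Matrix.det_one]),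
    IsUnit.of_mul_eq_one (uniWinv n d).det
      (by rw [← Matrix.det_mul, uniW_mul_inv n d hd, Matrix.det_one]), ?_⟩
  refine Matrix.ext fun p q => ?_
  rw [Matrix.mul_apply]
  have hL : ∀ r : Fin d × Fin n, (uniV m d * lancasterLs m n d P) p r
      = ∑ s1 : Fin d, (if p.1 = s1 then 1 else if (p.1 : ℕ) = d - 1 then X ^ (d - 1 - (s1 : ℕ)) else 0)
          * lancasterLs m n d P (s1, p.2) r := by
    intro r
    rw [Matrix.mul_apply]
    simp only [uniV]
    exact kronL (fun i j => if i = j then (1 : Polynomial ℂ)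
      else if (i : ℕ) = d - 1 then X ^ (d - 1 - (j : ℕ)) else 0)
      (fun s => lancasterLs m n d P s r) p.2 p.1
  simp only [hL, uniW]
  rw [kronR (fun i j => if (i : ℕ) ≤ (j : ℕ) then (X : Polynomial ℂ) ^ ((j : ℕ) - (i : ℕ)) else 0)
      (fun r => ∑ s1 : Fin d, (if p.1 = s1 then 1 else if (p.1 : ℕ) = d - 1 then X ^ (d - 1 - (s1 : ℕ)) else 0)
        * lancasterLs m n d P (s1, p.2) r) q.2 q.1]
  have hPc : ∀ i : Fin (d + 1), coeffP m n d P (i : ℕ) = P i := fun i => by rw [coeffP, dif_pos i.isLt]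
  have hsk := keyLemma d hd (X : Polynomial ℂ) (fun i => C (coeffP m n d P i p.2 q.2))
      (fun i hi => by simp [coeffP, show ¬ i < d + 1 by omega]) (p.1 : ℕ) (q.1 : ℕ) p.1.2 q.1.2
  simp only [Finset.sum_range, LA, hPc] at hsk
  simp only [Fin.ext_iff, lancasterLs, diagTP]
  exact hsk
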